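/- All states of a (bottom-up) tree automaton A = (Q, Σ, F, δ) are reachable if and only if there exists a total well-founded order < on Q such that for every state q ∈ Q there exist a function symbol f ∈ Σ of arity n and states q₁ < q, q₂ < q, …, qₙ < q with f(q₁,…,qₙ) ⇝ q a transition in δ. -/

import Mathlib

/-- Terms over a ranked signature `F` (with arity `ar`) and variables `V`.
States of a tree automaton are treated as extra constants, i.e. variables. -/
inductive Tm (F : Type) (ar : F → ℕ) (V : Type) : Type
  | var : V → Tm F ar V
  | node : (f : F) → (Fin (ar f) → Tm F ar V) → Tm F ar V

namespace Tm

variable {F : Type} {ar : F → ℕ}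

/-- Substitution. -/
def subst {V W : Type} (σ : V → Tm F ar W) : Tm F ar V → Tm F ar W
  | var x => σ x
  | node f ts => node f (fun i => (ts i).subst σ)

/-- The list of variable occurrences of a term. -/
def varsList {V : Type} : Tm F ar V → List V
  | var x => [x]
  | node f ts => (List.ofFn (fun i => (ts i).varsList)).flatten

/-- A term is linear if every variable occurs at most once. -/
def Linear {V : Type} (t : Tm F ar V) : Prop := t.varsList.Nodup

/-- Subterm relation. -/
inductive Subtm {V : Type} : Tm F ar V → Tm F ar V → Prop
  | refl (t : Tm F ar V) : Subtm t t
  | child {s : Tm F ar V} {f : F} {ts : Fin (ar f) → Tm F ar V} (i : Fin (ar f)) :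
      Subtm s (ts i) → Subtm s (node f ts)

end Tm

/-- Ground terms: terms without variables. -/
abbrev GTm (F : Type) (ar : F → ℕ) : Type := Tm F ar Empty

/-- A ground term viewed as a term over any variable type. -/
def GTm.toTm {F : Type} {ar : F → ℕ} {V : Type} (t : GTm F ar) : Tm F ar V :=
  t.subst (fun e => e.elim)

/-- A (bottom-up, possibly non-deterministic) tree automaton:
final states and a transition relation `δ`. -/
structure Automaton (F : Type) (ar : F → ℕ) (Q : Type) where
  final : Set Q
  delta : (f : F) → (Fin (ar f) → Q) → Q → Prop

namespace Automaton

variable {F : Type} {ar : F → ℕ} {Q Q' : Type}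

/-- One rewrite step `⇝` induced by an automaton on terms over `Σ ∪ Q`. -/
inductive Step (A : Automaton F ar Q) : Tm F ar Q → Tm F ar Q → Prop
  | base {f : F} {qs : Fin (ar f) → Q} {q : Q} :
      A.delta f qs q → Step A (.node f (fun i => .var (qs i))) (.var q)
  | congr {f : F} {ts : Fin (ar f) → Tm F ar Q} {i : Fin (ar f)} {t' : Tm F ar Q} :
      Step A (ts i) t' → Step A (.node f ts) (.node f (Function.update ts i t'))

/-- The reduction relation `⇝*`. -/
def Steps (A : Automaton F ar Q) : Tm F ar Q → Tm F ar Q → Prop :=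
  Relation.ReflTransGen (Step A)

/-- A state is reachable if some ground term reduces to it. -/
def Reachable (A : Automaton F ar Q) (q : Q) : Prop :=
  ∃ t : GTm F ar, A.Steps t.toTm (.var q)

/-- The language of the automaton. -/
def Lang (A : Automaton F ar Q) : Set (GTm F ar) :=
  {t | ∃ q ∈ A.final, A.Steps t.toTm (.var q)}

/-- The product automaton. -/
def prod (A : Automaton F ar Q) (B : Automaton F ar Q') : Automaton F ar (Q × Q') where
  final := A.final ×ˢ B.final
  delta f qs q := A.delta f (fun i => (qs i).1) q.1 ∧ B.delta f (fun i => (qs i).2) q.2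

/-- Determinism. -/
def Deterministic (A : Automaton F ar Q) : Prop :=
  ∀ (f : F) (qs : Fin (ar f) → Q) (q q' : Q), A.delta f qs q → A.delta f qs q' → q = q'

/-- Completeness. -/
def Complete (A : Automaton F ar Q) : Prop :=
  ∀ (f : F) (qs : Fin (ar f) → Q), ∃ q : Q, A.delta f qs q

end Automaton

/-- A term rewriting system: a set of rules over variables `X`. -/
abbrev TRS (F : Type) (ar : F → ℕ) (X : Type) : Type := Set (Tm F ar X × Tm F ar X)

/-- A TRS is left-linear if no variable occurs twice in a left-hand side. -/
def LeftLinear {F : Type} {ar : F → ℕ} {X : Type} (R : TRS F ar X) : Prop :=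
  ∀ p ∈ R, p.1.Linear

/-- One rewrite step `→_R` (on terms over any variable type `V`). -/
inductive RStep {F : Type} {ar : F → ℕ} {X V : Type} (R : TRS F ar X) :
    Tm F ar V → Tm F ar V → Prop
  | base {l r : Tm F ar X} {σ : X → Tm F ar V} :
      (l, r) ∈ R → RStep R (l.subst σ) (r.subst σ)
  | congr {f : F} {ts : Fin (ar f) → Tm F ar V} {i : Fin (ar f)} {t' : Tm F ar V} :
      RStep R (ts i) t' → RStep R (.node f ts) (.node f (Function.update ts i t'))

/-- `t` is an `R`-normal form. -/
def IsNF {F : Type} {ar : F → ℕ} {X V : Type} (R : TRS F ar X) (t : Tm F ar V) : Prop :=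
  ∀ t', ¬ RStep R t t'

section Aux

variable {F : Type} {ar : F → ℕ} {Q : Type}

/-- Size of a term. -/
def tmSize {V : Type} : Tm F ar V → ℕ
  | .var _ => 1
  | .node _ ts => 1 + ∑ i, tmSize (ts i)

lemma tmSize_lt {V : Type} {f : F} {ts : Fin (ar f) → Tm F ar V} (i : Fin (ar f)) :
    tmSize (ts i) < tmSize (Tm.node f ts) := by
  have h : tmSize (ts i) ≤ ∑ j, tmSize (ts j) :=
    Finset.single_le_sum (f := fun j => tmSize (ts j)) (fun _ _ => Nat.zero_le _)
      (Finset.mem_univ i)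
  have : tmSize (Tm.node f ts) = 1 + ∑ j, tmSize (ts j) := rfl
  omega

namespace Automaton

lemma steps_node_inv_aux {A : Automaton F ar Q} {t : Tm F ar Q} {q : Q}
    (h : A.Steps t (.var q)) :
    t = .var q ∨ ∃ (f : F) (ts : Fin (ar f) → Tm F ar Q) (qs : Fin (ar f) → Q),
      t = .node f ts ∧ A.delta f qs q ∧ ∀ i, A.Steps (ts i) (.var (qs i)) := by
  induction h using Relation.ReflTransGen.head_induction_on with
  | refl => exact Or.inl rfl
  | head hab hbc ih =>
    cases hab with
    | base hd =>
      rename_i f qs q₀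
      rcases ih with heq | ⟨f', ts', qs', heq, _, _⟩
      · -- var q₀ = var q
        injection heq with hq
        subst hq
        exact Or.inr ⟨f, _, qs, rfl, hd, fun i => Relation.ReflTransGen.refl⟩
      · simp at heq
    | congr hstep =>
      rename_i f ts i t'
      rcases ih with heq | ⟨f', ts', qs', heq, hd, hs⟩
      · simp at heq
      · injection heq with hf hts
        subst hf
        have hts' : Function.update ts i t' = ts' := eq_of_heq hts
        subst hts'
        refine Or.inr ⟨f, ts, qs', rfl, hd, fun j => ?_⟩
        rcases eq_or_ne j i with rfl | hne
        · exact Relation.ReflTransGen.head hstep (by simpa [Automaton.Steps] using hs j)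
        · simpa [Function.update_of_ne hne] using hs j

lemma steps_node_inv {A : Automaton F ar Q} {f : F} {ts : Fin (ar f) → Tm F ar Q} {q : Q}
    (h : A.Steps (.node f ts) (.var q)) :
    ∃ qs : Fin (ar f) → Q, A.delta f qs q ∧ ∀ i, A.Steps (ts i) (.var (qs i)) := by
  rcases steps_node_inv_aux h with heq | ⟨f', ts', qs, heq, hd, hs⟩
  · simp at heq
  · injection heq with hf hts
    subst hf
    have hts' : ts = ts' := eq_of_heq hts
    subst hts'
    exact ⟨qs, hd, hs⟩

lemma steps_congr_update {A : Automaton F ar Q} {f : F} {ts : Fin (ar f) → Tm F ar Q}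
    {i : Fin (ar f)} {t' : Tm F ar Q} (h : A.Steps (ts i) t') :
    A.Steps (.node f ts) (.node f (Function.update ts i t')) := by
  induction h with
  | refl =>
    rw [Function.update_eq_self]
    exact Relation.ReflTransGen.refl
  | tail hb hstep ih =>
    rename_i b c
    refine ih.tail ?_
    have h1 : A.Step (Tm.node f (Function.update ts i b))
        (Tm.node f (Function.update (Function.update ts i b) i c)) :=
      Automaton.Step.congr (i := i) (by simpa using hstep)
    simpa [Function.update_idem] using h1

lemma steps_congr_all {A : Automaton F ar Q} {f : F} {us vs : Fin (ar f) → Tm F ar Q}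
    (h : ∀ i, A.Steps (us i) (vs i)) :
    A.Steps (.node f us) (.node f vs) := by
  have key : ∀ l : List (Fin (ar f)),
      A.Steps (.node f us) (.node f (fun i => if i ∈ l then vs i else us i)) := by
    intro l
    induction l with
    | nil =>
      simp only [List.not_mem_nil, if_false]
      exact Relation.ReflTransGen.refl
    | cons j l ih =>
      have h2 : A.Steps (.node f (fun i => if i ∈ l then vs i else us i))
          (.node f (Function.update (fun i => if i ∈ l then vs i else us i) j (vs j))) := by
        refine steps_congr_update ?_
        by_cases hj : j ∈ l
        · simp only [hj, if_true]
          exact Relation.ReflTransGen.refl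
        · simp only [hj, if_false]
          exact h j
      have h3 : Function.update (fun i => if i ∈ l then vs i else us i) j (vs j)
          = fun i => if i ∈ j :: l then vs i else us i := by
        funext i
        rcases eq_or_ne i j with rfl | hij
        · simp
        · simp [Function.update_of_ne hij, List.mem_cons, hij]
      exact ih.trans (h3 ▸ h2)
  have hfin := key (List.finRange (ar f))
  simpa [List.mem_finRange] using hfin

end Automaton

end Aux

/-- All states are reachable iff there is a total well-founded order `<` on `Q` such that
every state has an incoming transition from strictly smaller states. -/
theorem all_states_reachable_iff_order {F : Type} {ar : F → ℕ} {Q : Type} [Finite Q]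
    (A : Automaton F ar Q) :
    (∀ q : Q, A.Reachable q) ↔
      ∃ r : Q → Q → Prop, IsWellOrder Q r ∧
        ∀ q : Q, ∃ (f : F) (qs : Fin (ar f) → Q),
          (∀ i, r (qs i) q) ∧ A.delta f qs q := by
  classical
  haveI := Fintype.ofFinite Q
  constructor
  · intro hall
    have hPex : ∀ q : Q, ∃ n : ℕ, ∃ t : GTm F ar, tmSize t ≤ n ∧ A.Steps t.toTm (.var q) := by
      intro q
      obtain ⟨t, ht⟩ := hall q
      exact ⟨tmSize t, t, le_refl _, ht⟩
    set m : Q → ℕ := fun q => Nat.find (hPex q) with hm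
    have hmspec : ∀ q : Q, ∃ t : GTm F ar, tmSize t ≤ m q ∧ A.Steps t.toTm (.var q) :=
      fun q => Nat.find_spec (hPex q)
    have hmmin : ∀ (q : Q) (n : ℕ),
        (∃ t : GTm F ar, tmSize t ≤ n ∧ A.Steps t.toTm (.var q)) → m q ≤ n :=
      fun q n h => Nat.find_le h
    have key : ∀ q : Q, ∃ (f : F) (qs : Fin (ar f) → Q),
        (∀ i, m (qs i) < m q) ∧ A.delta f qs q := by
      intro q
      obtain ⟨t, hts, hst⟩ := hmspec q
      cases t with
      | var e => exact e.elim
      | node f ts =>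
        have hst' : A.Steps (Tm.node f (fun i => GTm.toTm (ts i))) (.var q) := hst
        obtain ⟨qs, hd, hs⟩ := Automaton.steps_node_inv hst'
        refine ⟨f, qs, fun i => ?_, hd⟩
        have h1 : m (qs i) ≤ tmSize (ts i) := hmmin _ _ ⟨ts i, le_refl _, hs i⟩
        have h2 : tmSize (ts i) < tmSize (Tm.node f ts) := tmSize_lt i
        omega
    set N : ℕ := Fintype.card Q with hN
    set e : Q ≃ Fin N := Fintype.equivFin Q with he
    set g : Q → ℕ := fun q => m q * N + (e q : ℕ) with hg
    have hmono : ∀ a b : Q, m a < m b → g a < g b := by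
      intro a b hab
      have h1 : (e a : ℕ) < N := (e a).isLt
      have h2 : (m a + 1) * N ≤ m b * N := Nat.mul_le_mul_right N hab
      show m a * N + (e a : ℕ) < m b * N + (e b : ℕ)
      calc m a * N + (e a : ℕ) < m a * N + N := Nat.add_lt_add_left h1 _
        _ = (m a + 1) * N := by ring
        _ ≤ m b * N := h2
        _ ≤ m b * N + (e b : ℕ) := Nat.le_add_right _ _
    have hinj : Function.Injective g := by
      intro a b h
      rcases lt_trichotomy (m a) (m b) with h' | h' | h'
      · exact absurd h (Nat.ne_of_lt (hmono a b h'))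
      · have h4 : m a * N + (e a : ℕ) = m b * N + (e b : ℕ) := h
        rw [h'] at h4
        have h5 : (e a : ℕ) = (e b : ℕ) := Nat.add_left_cancel h4
        exact e.injective (Fin.ext h5)
      · exact absurd h.symm (Nat.ne_of_lt (hmono b a h'))
    refine ⟨fun a b => g a < g b, ?_, ?_⟩
    · haveI htri : IsTrichotomous Q (fun a b => g a < g b) := by
        constructor
        intro a b hab hba
        rcases Nat.lt_trichotomy (g a) (g b) with h | h | h
        · exact absurd h hab
        · exact hinj h
        · exact absurd h hba
      haveI htrans : IsTrans Q (fun a b => g a < g b) := ⟨fun _ _ _ => Nat.lt_trans⟩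
      haveI hwf : IsWellFounded Q (fun a b => g a < g b) :=
        ⟨InvImage.wf g Nat.lt_wfRel.wf⟩
      exact { }
    · intro q
      obtain ⟨f, qs, hlt, hd⟩ := key q
      exact ⟨f, qs, fun i => hmono _ _ (hlt i), hd⟩
  · rintro ⟨r, hwo, hstep⟩ q
    haveI := hwo
    have hwf : WellFounded r := IsWellFounded.wf
    induction q using hwf.induction with
    | _ x ih =>
      obtain ⟨f, qs, hlt, hd⟩ := hstep x
      have hreach : ∀ i, A.Reachable (qs i) := fun i => ih (qs i) (hlt i)
      choose ts hts using hreach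
      refine ⟨Tm.node f ts, ?_⟩
      have h1 : A.Steps (Tm.node f (fun i => GTm.toTm (ts i)))
          (Tm.node f (fun i => Tm.var (qs i))) :=
        Automaton.steps_congr_all (fun i => hts i)
      have h2 : A.Step (Tm.node f (fun i => Tm.var (qs i))) (Tm.var x) :=
        Automaton.Step.base hd
      exact h1.tail h2
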